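/- Let V be a vector space of finite dimension n over a field K equipped with a nondegenerate symmetric bilinear form ⟨·,·⟩, and let ξ be an isotropic subspace (ξ ⊆ ξ^⊥). Then for every subspace α of V: [dim((ξ^⊥ ∩ α) + ξ) − dim ξ] + [dim((ξ^⊥ ∩ α^⊥) + ξ) − dim ξ] = dim ξ^⊥ − dim ξ = n − 2 dim ξ. -/

import Mathlib

open Module

lemma orthogonal_sup_aux {K V : Type*} [Field K] [AddCommGroup V] [Module K V]
    (B : LinearMap.BilinForm K V) (U T : Submodule K V) :
    B.orthogonal (U ⊔ T) = B.orthogonal U ⊓ B.orthogonal T := by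
  ext x
  simp only [Submodule.mem_inf, LinearMap.BilinForm.mem_orthogonal_iff]
  constructor
  · intro h
    exact ⟨fun n hn => h n (Submodule.mem_sup_left hn),
           fun n hn => h n (Submodule.mem_sup_right hn)⟩
  · rintro ⟨h1, h2⟩ n hn
    obtain ⟨u, hu, t, ht, rfl⟩ := Submodule.mem_sup.mp hn
    have hu' := h1 u hu
    have ht' := h2 t ht
    simp [hu', ht']

/-- In an `n`-dimensional nondegenerate orthogonal space `(V, ⟨·,·⟩)` with
an isotropic subspace `ξ ⊆ ξ^⊥`, for every subspace `α`:
`[dim((ξ^⊥ ∩ α) + ξ) − dim ξ] + [dim((ξ^⊥ ∩ α^⊥) + ξ) − dim ξ] = dim ξ^⊥ − dim ξ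
 = n − 2 dim ξ`. -/
theorem cleaning_identity_isotropic {K V : Type*} [Field K] [AddCommGroup V]
    [Module K V] [FiniteDimensional K V]
    (B : LinearMap.BilinForm K V) (hB : B.Nondegenerate)
    (hsymm : ∀ x y : V, B x y = B y x)
    (ξ : Submodule K V) (hξ : ξ ≤ B.orthogonal ξ) (α : Submodule K V) :
    ((finrank K ((B.orthogonal ξ ⊓ α) ⊔ ξ : Submodule K V) : ℤ) - finrank K ξ)
          + ((finrank K ((B.orthogonal ξ ⊓ B.orthogonal α) ⊔ ξ : Submodule K V) : ℤ)
              - finrank K ξ)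
        = (finrank K (B.orthogonal ξ) : ℤ) - finrank K ξ ∧
      (finrank K (B.orthogonal ξ) : ℤ) - finrank K ξ
        = (finrank K V : ℤ) - 2 * finrank K ξ := by
  have hrefl : B.IsRefl := fun x y h => (hsymm y x).trans h
  set W := B.orthogonal ξ with hWdef
  set A := B.orthogonal α with hAdef
  set n := finrank K V with hn
  -- basic dimension facts from nondegeneracy
  have horthdim : ∀ S : Submodule K V, finrank K S + finrank K (B.orthogonal S) = n := by
    intro S
    have := LinearMap.BilinForm.finrank_add_finrank_orthogonal hrefl (B := B) S
    rw [B.orthogonal_top_eq_bot hB, inf_bot_eq, finrank_bot, add_zero] at this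
    exact this
  have hWn : finrank K ξ + finrank K W = n := horthdim ξ
  have hAn : finrank K α + finrank K A = n := horthdim α
  -- double orthogonals
  have hWo : B.orthogonal W = ξ := LinearMap.BilinForm.orthogonal_orthogonal hB hrefl ξ
  have hAo : B.orthogonal A = α := LinearMap.BilinForm.orthogonal_orthogonal hB hrefl α
  -- dimensions of W ⊔ α and W ⊔ A via orthogonals
  have hsup1 : finrank K (W ⊔ α : Submodule K V) + finrank K (ξ ⊓ A : Submodule K V) = n := by
    have := horthdim (W ⊔ α)
    rwa [orthogonal_sup_aux, hWo, ← hAdef] at this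
  have hsup2 : finrank K (W ⊔ A : Submodule K V) + finrank K (ξ ⊓ α : Submodule K V) = n := by
    have := horthdim (W ⊔ A)
    rwa [orthogonal_sup_aux, hWo, hAo] at this
  -- inf/sup dimension formulas
  have hd1 : finrank K (W ⊔ α : Submodule K V) + finrank K (W ⊓ α : Submodule K V)
      = finrank K W + finrank K α := Submodule.finrank_sup_add_finrank_inf_eq W α
  have hd2 : finrank K (W ⊔ A : Submodule K V) + finrank K (W ⊓ A : Submodule K V)
      = finrank K W + finrank K A := Submodule.finrank_sup_add_finrank_inf_eq W A
  -- simplify the triple infs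
  have hi1 : (W ⊓ α) ⊓ ξ = ξ ⊓ α := by
    apply le_antisymm
    · exact le_inf inf_le_right (inf_le_left.trans inf_le_right)
    · exact le_inf (le_inf (inf_le_left.trans hξ) inf_le_right) inf_le_left
  have hi2 : (W ⊓ A) ⊓ ξ = ξ ⊓ A := by
    apply le_antisymm
    · exact le_inf inf_le_right (inf_le_left.trans inf_le_right)
    · exact le_inf (le_inf (inf_le_left.trans hξ) inf_le_right) inf_le_left
  have he1 : finrank K ((W ⊓ α) ⊔ ξ : Submodule K V) + finrank K (ξ ⊓ α : Submodule K V)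
      = finrank K (W ⊓ α : Submodule K V) + finrank K ξ := by
    have := Submodule.finrank_sup_add_finrank_inf_eq (W ⊓ α) ξ
    rwa [hi1] at this
  have he2 : finrank K ((W ⊓ A) ⊔ ξ : Submodule K V) + finrank K (ξ ⊓ A : Submodule K V)
      = finrank K (W ⊓ A : Submodule K V) + finrank K ξ := by
    have := Submodule.finrank_sup_add_finrank_inf_eq (W ⊓ A) ξ
    rwa [hi2] at this
  constructor <;> omega
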